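/- For an integer k ≥ 1 and c ≥ 0, let X_c be a Poisson random variable with mean c and define m̃(k,c) := E[X_c/(X_c+2k+1)²] + 2·E[X_c(X_c−1)/(X_c+2k+1)²]. Then, as a function of c, m̃(k,·) is right-continuous on [0,∞), non-decreasing, and m̃(k,0) = 0; moreover there exists c₂(k) ∈ (0,∞) such that m̃(k,c) > 1 for all c > c₂(k). -/

import Mathlib

set_option maxHeartbeats 1000000


open Filter
open scoped ENNReal Topology Classical

noncomputable section

/-- the Poisson(c) probability mass function -/
def poissonPMF (c : ℝ) (m : ℕ) : ℝ := Real.exp (-c) * c ^ m / (Nat.factorial m)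

/-- `m̃(k,c) = E[X/(X+2k+1)²] + 2·E[X(X−1)/(X+2k+1)²]`, `X ∼ Poisson(c)` -/
def mtilde (k : ℕ) (c : ℝ) : ℝ :=
  (∑' m : ℕ, poissonPMF c m * ((m : ℝ) / ((m : ℝ) + 2 * k + 1) ^ 2)) +
    2 * ∑' m : ℕ, poissonPMF c m * ((m : ℝ) * ((m : ℝ) - 1) / ((m : ℝ) + 2 * k + 1) ^ 2)

/-- combined weight `h(m) = (2m² − m)/(m+2k+1)²` -/
def hfun (k m : ℕ) : ℝ := (2 * (m : ℝ) ^ 2 - m) / ((m : ℝ) + 2 * k + 1) ^ 2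

lemma den_pos (k m : ℕ) : 0 < ((m : ℝ) + 2 * k + 1) ^ 2 := by positivity

lemma hfun_nonneg (k m : ℕ) : 0 ≤ hfun k m := by
  apply div_nonneg _ (den_pos k m).le
  rcases m with _ | n
  · norm_num
  · have h1 : (1 : ℝ) ≤ ((n + 1 : ℕ) : ℝ) := by exact_mod_cast Nat.one_le_iff_ne_zero.2 (by simp)
    nlinarith

lemma hfun_le_two (k m : ℕ) : hfun k m ≤ 2 := by
  rw [hfun, div_le_iff₀ (den_pos k m)]
  have hm : (0 : ℝ) ≤ (m : ℝ) := Nat.cast_nonneg m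
  have hk : (0 : ℝ) ≤ (k : ℝ) := Nat.cast_nonneg k
  nlinarith

lemma abs_hfun_le (k m : ℕ) : |hfun k m| ≤ 2 :=
  abs_le.2 ⟨by linarith [hfun_nonneg k m], hfun_le_two k m⟩

lemma hfun_step (k m : ℕ) : hfun k m ≤ hfun k (m + 1) := by
  rw [hfun, hfun, div_le_div_iff₀ (den_pos k m) (den_pos k (m + 1))]
  have hm : (0 : ℝ) ≤ (m : ℝ) := Nat.cast_nonneg m
  have hk : (0 : ℝ) ≤ (k : ℝ) := Nat.cast_nonneg k
  push_cast
  nlinarith [sq_nonneg ((m : ℝ) + 2 * k + 1), mul_nonneg hm hk, mul_nonneg (mul_nonneg hm hm) hk,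
    mul_nonneg (mul_nonneg hm hk) hk, mul_nonneg hk hk]

/-- generic summability of `w m / m! * c ^ m` for bounded `w` -/
lemma summable_weight (c : ℝ) (w : ℕ → ℝ) (C : ℝ) (hC : ∀ m, |w m| ≤ C) :
    Summable (fun m : ℕ => w m / (Nat.factorial m) * c ^ m) := by
  apply Summable.of_norm_bounded (g := fun m : ℕ => C * (|c| ^ m / (Nat.factorial m)))
    ((Real.summable_pow_div_factorial |c|).mul_left C)
  intro m
  have h1 : ‖w m / (Nat.factorial m) * c ^ m‖ = |w m| * (|c| ^ m / (Nat.factorial m)) := by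
    rw [Real.norm_eq_abs, abs_mul, abs_div, abs_pow, Nat.abs_cast]
    ring
  rw [h1]
  have h2 : (0 : ℝ) ≤ |c| ^ m / (Nat.factorial m) := by positivity
  exact mul_le_mul_of_nonneg_right (hC m) h2

lemma pmf_eq (c : ℝ) (m : ℕ) : poissonPMF c m = Real.exp (-c) * (c ^ m / (Nat.factorial m)) := by
  rw [poissonPMF]; ring

/-- the series `Q k c = ∑ h(m)/m! · cᵐ` -/
def Qser (k : ℕ) (c : ℝ) : ℝ := ∑' m : ℕ, hfun k m / (Nat.factorial m) * c ^ m

/-- the series of shifted weights -/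
def Dser (k : ℕ) (c : ℝ) : ℝ := ∑' m : ℕ, hfun k (m + 1) / (Nat.factorial m) * c ^ m

lemma summable_Q (k : ℕ) (c : ℝ) :
    Summable (fun m : ℕ => hfun k m / (Nat.factorial m) * c ^ m) :=
  summable_weight c _ 2 (fun m => abs_hfun_le k m)

lemma summable_D (k : ℕ) (c : ℝ) :
    Summable (fun m : ℕ => hfun k (m + 1) / (Nat.factorial m) * c ^ m) :=
  summable_weight c _ 2 (fun m => abs_hfun_le k (m + 1))

lemma fpiece_bounds (k m : ℕ) :
    0 ≤ (m : ℝ) / ((m : ℝ) + 2 * k + 1) ^ 2 ∧ (m : ℝ) / ((m : ℝ) + 2 * k + 1) ^ 2 ≤ 1 := by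
  constructor
  · exact div_nonneg (Nat.cast_nonneg m) (den_pos k m).le
  · rw [div_le_one (den_pos k m)]
    have hm : (0 : ℝ) ≤ (m : ℝ) := Nat.cast_nonneg m
    have hk : (0 : ℝ) ≤ (k : ℝ) := Nat.cast_nonneg k
    nlinarith

lemma gpiece_bounds (k m : ℕ) :
    0 ≤ (m : ℝ) * ((m : ℝ) - 1) / ((m : ℝ) + 2 * k + 1) ^ 2 ∧
      (m : ℝ) * ((m : ℝ) - 1) / ((m : ℝ) + 2 * k + 1) ^ 2 ≤ 1 := by
  have hm : (0 : ℝ) ≤ (m : ℝ) := Nat.cast_nonneg m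
  have hk : (0 : ℝ) ≤ (k : ℝ) := Nat.cast_nonneg k
  constructor
  · apply div_nonneg _ (den_pos k m).le
    rcases m with _ | n
    · norm_num
    · have h1 : (1 : ℝ) ≤ ((n + 1 : ℕ) : ℝ) := by exact_mod_cast Nat.one_le_iff_ne_zero.2 (by simp)
      nlinarith
  · rw [div_le_one (den_pos k m)]
    nlinarith

lemma summable_pmf_f (k : ℕ) (c : ℝ) :
    Summable (fun m : ℕ => poissonPMF c m * ((m : ℝ) / ((m : ℝ) + 2 * k + 1) ^ 2)) := by
  have := (summable_weight c (fun m => (m : ℝ) / ((m : ℝ) + 2 * k + 1) ^ 2) 1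
    (fun m => abs_le.2 ⟨by linarith [(fpiece_bounds k m).1], (fpiece_bounds k m).2⟩)).mul_left
    (Real.exp (-c))
  apply this.congr
  intro m
  rw [pmf_eq]; ring

lemma summable_pmf_g (k : ℕ) (c : ℝ) :
    Summable (fun m : ℕ =>
      poissonPMF c m * ((m : ℝ) * ((m : ℝ) - 1) / ((m : ℝ) + 2 * k + 1) ^ 2)) := by
  have := (summable_weight c (fun m => (m : ℝ) * ((m : ℝ) - 1) / ((m : ℝ) + 2 * k + 1) ^ 2) 1
    (fun m => abs_le.2 ⟨by linarith [(gpiece_bounds k m).1], (gpiece_bounds k m).2⟩)).mul_left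
    (Real.exp (-c))
  apply this.congr
  intro m
  rw [pmf_eq]; ring

lemma summable_pmf_h (k : ℕ) (c : ℝ) :
    Summable (fun m : ℕ => poissonPMF c m * hfun k m) := by
  have := (summable_Q k c).mul_left (Real.exp (-c))
  apply this.congr
  intro m
  rw [pmf_eq]; ring

lemma pmf_h_eq (k : ℕ) (c : ℝ) (m : ℕ) :
    poissonPMF c m * ((m : ℝ) / ((m : ℝ) + 2 * k + 1) ^ 2) +
      2 * (poissonPMF c m * ((m : ℝ) * ((m : ℝ) - 1) / ((m : ℝ) + 2 * k + 1) ^ 2)) =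
    poissonPMF c m * hfun k m := by
  rw [hfun]
  have hd : ((m : ℝ) + 2 * k + 1) ^ 2 ≠ 0 := (den_pos k m).ne'
  field_simp
  ring

lemma mtilde_eq (k : ℕ) (c : ℝ) : mtilde k c = Real.exp (-c) * Qser k c := by
  rw [mtilde, Qser, ← tsum_mul_left (a := (2 : ℝ)), ← tsum_mul_left (a := Real.exp (-c))]
  rw [← Summable.tsum_add (summable_pmf_f k c) ((summable_pmf_g k c).mul_left 2)]
  apply tsum_congr
  intro m
  have hrhs : Real.exp (-c) * (hfun k m / (Nat.factorial m) * c ^ m) = poissonPMF c m * hfun k m := by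
    rw [pmf_eq]; ring
  rw [hrhs, ← pmf_h_eq k c m]

lemma mtilde_eq_tsum (k : ℕ) (c : ℝ) :
    mtilde k c = ∑' m : ℕ, poissonPMF c m * hfun k m := by
  rw [mtilde_eq, Qser, ← tsum_mul_left]
  apply tsum_congr
  intro m
  rw [pmf_eq]; ring

lemma hasDerivAt_Q (k : ℕ) (c : ℝ) : HasDerivAt (Qser k) (Dser k c) c := by
  set R : ℝ := |c| + 1 with hR
  have hRpos : 0 < R := by positivity
  have hcR : c ∈ Metric.ball (0 : ℝ) R := by
    simp only [Metric.mem_ball, dist_zero_right, Real.norm_eq_abs, hR]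
    linarith
  set u : ℕ → ℝ := fun m => 2 * ((m : ℝ) * R ^ (m - 1) / (Nat.factorial m)) with hu
  have hu_succ : ∀ m : ℕ, u (m + 1) = 2 * (R ^ m / (Nat.factorial m)) := by
    intro m
    simp only [hu]
    rw [Nat.add_sub_cancel, Nat.factorial_succ]
    have h1 : ((m + 1 : ℕ) : ℝ) ≠ 0 := by positivity
    push_cast
    field_simp
  have hu_sum : Summable u := by
    rw [← summable_nat_add_iff 1]
    exact ((Real.summable_pow_div_factorial R).mul_left 2).congr
      (fun m => (hu_succ m).symm)
  have key := hasDerivAt_tsum_of_isPreconnected hu_sum Metric.isOpen_ball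
    (convex_ball (0 : ℝ) R).isPreconnected
    (g := fun m z => hfun k m / (Nat.factorial m) * z ^ m)
    (g' := fun m z => hfun k m / (Nat.factorial m) * ((m : ℝ) * z ^ (m - 1)))
    (fun m z _ => (hasDerivAt_pow m z).const_mul _)
    (fun m z hz => ?_) hcR (summable_Q k c) hcR
  · have hDsum : Summable (fun m : ℕ =>
        hfun k m / (Nat.factorial m) * ((m : ℝ) * c ^ (m - 1))) := by
      apply Summable.of_norm_bounded (g := u) hu_sum
      intro m
      rcases m with _ | n
      · simp [hu]
      · rw [Real.norm_eq_abs, abs_mul, abs_mul, abs_div, Nat.abs_cast, abs_pow, Nat.abs_cast]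
        have h1 : |c| ^ (n + 1 - 1) ≤ R ^ (n + 1 - 1) :=
          pow_le_pow_left₀ (abs_nonneg c) (by linarith) _
        have h2 : (0 : ℝ) < ((n + 1).factorial : ℝ) := by positivity
        have h3 : |hfun k (n + 1)| / ((n + 1).factorial : ℝ) ≤ 2 / ((n + 1).factorial : ℝ) :=
          div_le_div_of_nonneg_right (abs_hfun_le k (n + 1)) h2.le
        simp only [hu]
        have h4 : (0 : ℝ) ≤ ((n + 1 : ℕ) : ℝ) := Nat.cast_nonneg _
        calc |hfun k (n + 1)| / ((n + 1).factorial : ℝ) * (((n + 1 : ℕ) : ℝ) * |c| ^ (n + 1 - 1))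
            ≤ 2 / ((n + 1).factorial : ℝ) * (((n + 1 : ℕ) : ℝ) * R ^ (n + 1 - 1)) := by
              apply mul_le_mul h3 (mul_le_mul_of_nonneg_left h1 h4) (by positivity) (by positivity)
          _ = 2 * (((n + 1 : ℕ) : ℝ) * R ^ (n + 1 - 1) / ((n + 1).factorial : ℝ)) := by ring
    have hshift : (∑' m : ℕ, hfun k m / (Nat.factorial m) * ((m : ℝ) * c ^ (m - 1)))
        = Dser k c := by
      rw [Summable.tsum_eq_zero_add hDsum]
      simp only [Nat.cast_zero, zero_mul, mul_zero, zero_add]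
      rw [Dser]
      apply tsum_congr
      intro m
      rw [Nat.add_sub_cancel, Nat.factorial_succ]
      have h1 : ((m.factorial : ℝ)) ≠ 0 := by positivity
      push_cast
      field_simp
    show HasDerivAt (fun z : ℝ => ∑' m : ℕ, hfun k m / (Nat.factorial m) * z ^ m) (Dser k c) c
    rw [← hshift]
    exact key
  · -- the norm bound on the ball
    rcases m with _ | n
    · simp [hu]
    · rw [Real.norm_eq_abs, abs_mul, abs_mul, abs_div, Nat.abs_cast, abs_pow, Nat.abs_cast]
      have hzR : |z| ≤ R := by
        simp only [Metric.mem_ball, dist_zero_right, Real.norm_eq_abs] at hz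
        linarith
      have h1 : |z| ^ (n + 1 - 1) ≤ R ^ (n + 1 - 1) := pow_le_pow_left₀ (abs_nonneg z) hzR _
      have h2 : (0 : ℝ) < ((n + 1).factorial : ℝ) := by positivity
      have h3 : |hfun k (n + 1)| / ((n + 1).factorial : ℝ) ≤ 2 / ((n + 1).factorial : ℝ) :=
        div_le_div_of_nonneg_right (abs_hfun_le k (n + 1)) h2.le
      have h4 : (0 : ℝ) ≤ ((n + 1 : ℕ) : ℝ) := Nat.cast_nonneg _
      simp only [hu]
      calc |hfun k (n + 1)| / ((n + 1).factorial : ℝ) * (((n + 1 : ℕ) : ℝ) * |z| ^ (n + 1 - 1))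
          ≤ 2 / ((n + 1).factorial : ℝ) * (((n + 1 : ℕ) : ℝ) * R ^ (n + 1 - 1)) := by
            apply mul_le_mul h3 (mul_le_mul_of_nonneg_left h1 h4) (by positivity) (by positivity)
        _ = 2 * (((n + 1 : ℕ) : ℝ) * R ^ (n + 1 - 1) / ((n + 1).factorial : ℝ)) := by ring

lemma hasDerivAt_mtilde (k : ℕ) (c : ℝ) :
    HasDerivAt (mtilde k) (Real.exp (-c) * (Dser k c - Qser k c)) c := by
  have he : HasDerivAt (fun x : ℝ => Real.exp (-x)) (-Real.exp (-c)) c := by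
    have := (Real.hasDerivAt_exp (-c)).comp c (hasDerivAt_neg c)
    simpa [Function.comp_def] using this
  have hq := hasDerivAt_Q k c
  have hprod := he.mul hq
  have heq : (fun x : ℝ => Real.exp (-x) * Qser k x) = mtilde k := by
    funext x
    rw [mtilde_eq]
  rw [show ((fun x : ℝ => Real.exp (-x)) * Qser k) = mtilde k from heq] at hprod
  have hv : Real.exp (-c) * (Dser k c - Qser k c) =
      -Real.exp (-c) * Qser k c + Real.exp (-c) * Dser k c := by ring
  rw [hv]
  exact hprod

lemma DsubQ_nonneg (k : ℕ) {c : ℝ} (hc : 0 ≤ c) : 0 ≤ Dser k c - Qser k c := by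
  rw [Dser, Qser, ← Summable.tsum_sub (summable_D k c) (summable_Q k c)]
  apply tsum_nonneg
  intro m
  have h1 : 0 ≤ (hfun k (m + 1) - hfun k m) := by linarith [hfun_step k m]
  have h2 : hfun k (m + 1) / (Nat.factorial m) * c ^ m - hfun k m / (Nat.factorial m) * c ^ m
      = (hfun k (m + 1) - hfun k m) / (Nat.factorial m) * c ^ m := by ring
  rw [h2]
  positivity

lemma continuous_mtilde (k : ℕ) : Continuous (mtilde k) :=
  continuous_iff_continuousAt.2 fun c => (hasDerivAt_mtilde k c).differentiableAt.continuousAt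

lemma hfun_large (k : ℕ) (hk : 1 ≤ k) (m : ℕ) (hm : 16 * k + 8 ≤ m) :
    (3 : ℝ) / 2 ≤ hfun k m := by
  rw [hfun, le_div_iff₀ (den_pos k m)]
  have hm' : (16 * (k : ℝ) + 8) ≤ (m : ℝ) := by exact_mod_cast hm
  have hk' : (1 : ℝ) ≤ (k : ℝ) := by exact_mod_cast hk
  nlinarith [sq_nonneg ((m : ℝ) - 16 * k - 8), mul_nonneg (sub_nonneg.2 hm') (sub_nonneg.2 hk')]

lemma tsum_pmf (c : ℝ) : ∑' m : ℕ, poissonPMF c m = 1 := by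
  have h1 : ∑' m : ℕ, c ^ m / (Nat.factorial m) = Real.exp c := by
    rw [Real.exp_eq_exp_ℝ, NormedSpace.exp_eq_tsum_div]
  have : ∑' m : ℕ, poissonPMF c m = Real.exp (-c) * ∑' m : ℕ, c ^ m / (Nat.factorial m) := by
    rw [← tsum_mul_left]
    exact tsum_congr fun m => pmf_eq c m
  rw [this, h1, ← Real.exp_add]
  simp

lemma summable_pmf (c : ℝ) : Summable (fun m : ℕ => poissonPMF c m) := by
  have := (summable_weight c (fun _ => 1) 1 (fun m => by norm_num)).mul_left (Real.exp (-c))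
  apply this.congr
  intro m
  rw [pmf_eq]; ring

lemma pmf_nonneg {c : ℝ} (hc : 0 ≤ c) (m : ℕ) : 0 ≤ poissonPMF c m := by
  rw [poissonPMF]; positivity

theorem supercritical_mean_offspring (k : ℕ) (hk : 1 ≤ k) :
    (∀ c : ℝ, 0 ≤ c → ContinuousWithinAt (mtilde k) (Set.Ici c) c) ∧
    MonotoneOn (mtilde k) (Set.Ici (0 : ℝ)) ∧
    mtilde k 0 = 0 ∧
    ∃ c₂ : ℝ, 0 < c₂ ∧ ∀ c : ℝ, c₂ < c → 1 < mtilde k c := by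
  refine ⟨fun c _ => (continuous_mtilde k).continuousAt.continuousWithinAt, ?_, ?_, ?_⟩
  · -- monotone
    apply monotoneOn_of_deriv_nonneg (convex_Ici 0) (continuous_mtilde k).continuousOn
      (fun x _ => (hasDerivAt_mtilde k x).differentiableAt.differentiableWithinAt)
    intro x hx
    rw [interior_Ici] at hx
    rw [(hasDerivAt_mtilde k x).deriv]
    exact mul_nonneg (Real.exp_nonneg _) (DsubQ_nonneg k (le_of_lt hx))
  · -- value at 0
    rw [mtilde]
    have h1 : ∀ m : ℕ, poissonPMF 0 m * ((m : ℝ) / ((m : ℝ) + 2 * k + 1) ^ 2) = 0 := by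
      intro m
      rcases m with _ | n
      · simp
      · simp [poissonPMF]
    have h2 : ∀ m : ℕ,
        poissonPMF 0 m * ((m : ℝ) * ((m : ℝ) - 1) / ((m : ℝ) + 2 * k + 1) ^ 2) = 0 := by
      intro m
      rcases m with _ | n
      · simp
      · simp [poissonPMF]
    rw [tsum_congr h1, tsum_congr h2, tsum_zero]
    simp
  · -- supercritical
    set M : ℕ := 16 * k + 8 with hM
    have hlim : Tendsto (fun c : ℝ => (M : ℝ) * (c ^ (M - 1) * Real.exp (-c))) atTop (𝓝 0) := by
      have := (Real.tendsto_pow_mul_exp_neg_atTop_nhds_zero (M - 1)).const_mul (M : ℝ)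
      simpa using this
    have hev : ∀ᶠ c in atTop, (M : ℝ) * (c ^ (M - 1) * Real.exp (-c)) < 1 / 3 := by
      have := hlim.eventually (eventually_lt_nhds (show (0:ℝ) < 1/3 by norm_num))
      simpa using this
    obtain ⟨c₀, hc₀⟩ := eventually_atTop.1 hev
    refine ⟨max c₀ 1, lt_of_lt_of_le zero_lt_one (le_max_right _ _), ?_⟩
    intro c hc
    have hc1 : (1 : ℝ) ≤ c := le_of_lt (lt_of_le_of_lt (le_max_right _ _) hc)
    have hc0 : (0 : ℝ) ≤ c := by linarith
    have hcc₀ : c₀ ≤ c := le_of_lt (lt_of_le_of_lt (le_max_left _ _) hc)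
    -- the head sum is small
    have hhead : ∑ m ∈ Finset.range M, poissonPMF c m < 1 / 3 := by
      have hbound : ∀ m ∈ Finset.range M, poissonPMF c m ≤ c ^ (M - 1) * Real.exp (-c) := by
        intro m hm
        rw [Finset.mem_range] at hm
        rw [poissonPMF]
        have h1 : c ^ m ≤ c ^ (M - 1) := pow_le_pow_right₀ hc1 (by omega)
        have h2 : (1 : ℝ) ≤ (Nat.factorial m : ℝ) := by exact_mod_cast m.factorial_pos
        rw [div_le_iff₀ (by positivity : (0:ℝ) < (Nat.factorial m : ℝ))]
        calc Real.exp (-c) * c ^ m ≤ Real.exp (-c) * c ^ (M - 1) :=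
              mul_le_mul_of_nonneg_left h1 (Real.exp_nonneg _)
          _ = c ^ (M - 1) * Real.exp (-c) * 1 := by ring
          _ ≤ c ^ (M - 1) * Real.exp (-c) * (Nat.factorial m : ℝ) := by
              apply mul_le_mul_of_nonneg_left h2
              positivity
      calc ∑ m ∈ Finset.range M, poissonPMF c m
          ≤ ∑ _m ∈ Finset.range M, c ^ (M - 1) * Real.exp (-c) := Finset.sum_le_sum hbound
        _ = (M : ℝ) * (c ^ (M - 1) * Real.exp (-c)) := by
            rw [Finset.sum_const, Finset.card_range, nsmul_eq_mul]
        _ < 1 / 3 := hc₀ c hcc₀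
    -- tail mass
    have hsplit : ∑ m ∈ Finset.range M, poissonPMF c m + ∑' m : ℕ, poissonPMF c (m + M) = 1 := by
      rw [Summable.sum_add_tsum_nat_add M (summable_pmf c), tsum_pmf]
    have htail : (2 : ℝ) / 3 < ∑' m : ℕ, poissonPMF c (m + M) := by linarith
    -- lower bound mtilde
    have hsum_h := summable_pmf_h k c
    have hsum_h_tail : Summable (fun m : ℕ => poissonPMF c (m + M) * hfun k (m + M)) := by
      exact ((summable_nat_add_iff M).2 hsum_h)
    have h1 : ∑' m : ℕ, poissonPMF c (m + M) * hfun k (m + M) ≤ mtilde k c := by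
      rw [mtilde_eq_tsum, ← Summable.sum_add_tsum_nat_add M hsum_h]
      have : (0 : ℝ) ≤ ∑ m ∈ Finset.range M, poissonPMF c m * hfun k m :=
        Finset.sum_nonneg fun m _ => mul_nonneg (pmf_nonneg hc0 m) (hfun_nonneg k m)
      linarith
    have h2 : (3 : ℝ) / 2 * ∑' m : ℕ, poissonPMF c (m + M)
        ≤ ∑' m : ℕ, poissonPMF c (m + M) * hfun k (m + M) := by
      rw [← tsum_mul_left]
      apply Summable.tsum_le_tsum _ (((summable_nat_add_iff M).2 (summable_pmf c)).mul_left _) hsum_h_tail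
      intro m
      have h3 : (3 : ℝ) / 2 ≤ hfun k (m + M) := hfun_large k hk (m + M) (by omega)
      have h4 : 0 ≤ poissonPMF c (m + M) := pmf_nonneg hc0 _
      calc (3 : ℝ) / 2 * poissonPMF c (m + M) = poissonPMF c (m + M) * (3 / 2) := by ring
        _ ≤ poissonPMF c (m + M) * hfun k (m + M) := mul_le_mul_of_nonneg_left h3 h4
    have : (1 : ℝ) < 3 / 2 * ∑' m : ℕ, poissonPMF c (m + M) := by linarith
    linarith

end
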